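/- Let C be a compact convex nonempty subset of ℝⁿ. If A, B are nonempty convex subsets of C, p in (0,1), and pA + (1-p)B = C, then A = B = C. -/

import Mathlib

open Set Module

section Aux

variable {E : Type} [NormedAddCommGroup E] [NormedSpace ℝ E]

/-- Extreme points of `C` lie in `A`. -/
lemma mink_extreme_mem_left {C A B : Set E} {p : ℝ} (hp0 : 0 < p) (hp1 : p < 1)
    (hAC : A ⊆ C) (hBC : B ⊆ C)
    (heq : Set.image2 (fun a b => p • a + (1-p) • b) A B = C) :
    C.extremePoints ℝ ⊆ A := by
  intro x hx
  obtain ⟨hxC, hext⟩ := hx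
  rw [← heq] at hxC
  obtain ⟨a, ha, b, hb, hab⟩ := hxC
  have := hext (hAC ha) (hBC hb) ⟨p, 1-p, hp0, by linarith, by ring, hab⟩
  exact this ▸ ha

lemma mink_closure_eq {C A B : Set E} {p : ℝ} (hp0 : 0 < p) (hp1 : p < 1)
    (hCcp : IsCompact C) (hCcv : Convex ℝ C)
    (hAC : A ⊆ C) (hAcv : Convex ℝ A) (hBC : B ⊆ C)
    (heq : Set.image2 (fun a b => p • a + (1-p) • b) A B = C) :
    closure A = C := by
  apply subset_antisymm (closure_minimal hAC hCcp.isClosed)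
  have h1 : convexHull ℝ (C.extremePoints ℝ) ⊆ A :=
    convexHull_min (mink_extreme_mem_left hp0 hp1 hAC hBC heq) hAcv
  calc C = closure (convexHull ℝ (C.extremePoints ℝ)) :=
        (closure_convexHull_extremePoints hCcp hCcv).symm
    _ ⊆ closure A := closure_mono h1

/-- Transfer the problem into a submodule `W` (after translating by `c`). -/
lemma mink_transfer [FiniteDimensional ℝ E] (W : Submodule ℝ E) (c : E)
    {C A B : Set E} {p : ℝ} (hp0 : 0 < p) (hp1 : p < 1)
    (hCcp : IsCompact C)
    (hAC : A ⊆ C) (hAne : A.Nonempty)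
    (hBC : B ⊆ C) (hBne : B.Nonempty)
    (heq : Set.image2 (fun a b => p • a + (1-p) • b) A B = C)
    (hAcv : Convex ℝ A) (hBcv : Convex ℝ B) (hCcv : Convex ℝ C)
    (hCW : ∀ x ∈ C, x - c ∈ W)
    (H : ∀ (C' A' B' : Set W), IsCompact C' → Convex ℝ C' →
      A' ⊆ C' → Convex ℝ A' → A'.Nonempty → B' ⊆ C' → Convex ℝ B' → B'.Nonempty →
      Set.image2 (fun a b => p • a + (1-p) • b) A' B' = C' → C' ⊆ A') :
    C ⊆ A := by
  classical
  set g : W → E := fun w => (w : E) + c with hg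
  have hgc : Continuous g := continuous_subtype_val.add continuous_const
  set C' : Set W := g ⁻¹' C with hC'
  set A' : Set W := g ⁻¹' A with hA'
  set B' : Set W := g ⁻¹' B with hB'
  -- affine property of g
  have hgaff : ∀ (a b : ℝ), a + b = 1 → ∀ (x y : W),
      g (a • x + b • y) = a • g x + b • g y := by
    intro a b hab x y
    simp only [hg, Submodule.coe_add, Submodule.coe_smul]
    match_scalars <;> simp [hab] <;> linarith
  -- compactness
  have hC'cp : IsCompact C' := by
    obtain ⟨R, hR⟩ := hCcp.isBounded.subset_closedBall 0
    apply Metric.isCompact_of_isClosed_isBounded (hCcp.isClosed.preimage hgc)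
    apply Bornology.IsBounded.subset (Metric.isBounded_closedBall (x := (0 : W))
      (r := R + ‖c‖))
    intro w hw
    have h1 : ‖(w : E) + c‖ ≤ R := by
      simpa [Metric.mem_closedBall, dist_zero_right] using hR hw
    have h2 : ‖(w : E)‖ ≤ R + ‖c‖ := by
      have h3 := norm_sub_le ((w : E) + c) c
      rw [add_sub_cancel_right] at h3
      linarith
    simpa [Metric.mem_closedBall, dist_zero_right] using h2
  -- convexity of preimages
  have hpre : ∀ (S : Set E), Convex ℝ S → Convex ℝ (g ⁻¹' S) := by
    intro S hS x hx y hy a b ha hb hab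
    simp only [mem_preimage] at *
    rw [hgaff a b hab x y]
    exact hS hx hy ha hb hab
  -- subsets
  have hA'C' : A' ⊆ C' := fun w hw => hAC hw
  have hB'C' : B' ⊆ C' := fun w hw => hBC hw
  -- nonempty
  obtain ⟨a0, ha0⟩ := hAne
  obtain ⟨b0, hb0⟩ := hBne
  have hA'ne : A'.Nonempty := ⟨⟨a0 - c, hCW a0 (hAC ha0)⟩, by
    show g _ ∈ A; simp only [hg]; simpa using ha0⟩
  have hB'ne : B'.Nonempty := ⟨⟨b0 - c, hCW b0 (hBC hb0)⟩, by
    show g _ ∈ B; simp only [hg]; simpa using hb0⟩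
  -- image2 property
  have himg : Set.image2 (fun a b => p • a + (1-p) • b) A' B' = C' := by
    apply subset_antisymm
    · rintro _ ⟨x, hx, y, hy, rfl⟩
      show g _ ∈ C
      rw [hgaff p (1-p) (by ring) x y, ← heq]
      exact mem_image2_of_mem hx hy
    · intro w hw
      have hwC : g w ∈ C := hw
      rw [← heq] at hwC
      obtain ⟨a, ha, b, hb, hab⟩ := hwC
      refine ⟨⟨a - c, hCW a (hAC ha)⟩, ?_, ⟨b - c, hCW b (hBC hb)⟩, ?_, ?_⟩
      · show g _ ∈ A; simp only [hg]; simpa using ha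
      · show g _ ∈ B; simp only [hg]; simpa using hb
      · apply Subtype.ext
        have hab' : p • a + (1-p) • b = (w : E) + c := hab
        push_cast
        have hc : p • c + (1-p) • c = c := by rw [← add_smul]; norm_num
        calc p • (a - c) + (1-p) • (b - c)
            = (p • a + (1-p) • b) - (p • c + (1-p) • c) := by
              rw [smul_sub, smul_sub]; abel
          _ = ((w : E) + c) - c := by rw [hab', hc]
          _ = (w : E) := add_sub_cancel_right _ _
  -- conclude
  have hsub := H C' A' B' hC'cp (hpre C hCcv) hA'C' (hpre A hAcv) hA'ne hB'C' (hpre B hBcv)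
    hB'ne himg
  intro x hx
  have hx' : (⟨x - c, hCW x hx⟩ : W) ∈ C' := by
    show g _ ∈ C; simp only [hg]; simpa using hx
  have := hsub hx'
  have : g (⟨x - c, hCW x hx⟩ : W) ∈ A := this
  simpa [hg] using this

lemma mink_aux (d : ℕ) : ∀ (E : Type) [NormedAddCommGroup E] [NormedSpace ℝ E]
    [FiniteDimensional ℝ E], finrank ℝ E ≤ d → ∀ (C A B : Set E) (p : ℝ),
    0 < p → p < 1 → IsCompact C → Convex ℝ C →
    A ⊆ C → Convex ℝ A → A.Nonempty → B ⊆ C → Convex ℝ B → B.Nonempty →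
    Set.image2 (fun a b => p • a + (1-p) • b) A B = C → C ⊆ A := by
  induction d with
  | zero =>
    intro E _ _ _ hd C A B p hp0 hp1 _ _ hAC _ hAne _ _ _ _
    obtain ⟨a, ha⟩ := hAne
    intro c _
    have : Subsingleton E := finrank_zero_iff.mp (Nat.le_zero.mp hd)
    rwa [Subsingleton.elim c a]
  | succ d ih =>
    intro E _ _ _ hd C A B p hp0 hp1 hCcp hCcv hAC hAcv hAne hBC hBcv hBne heq
    by_cases hspan : affineSpan ℝ C = ⊤
    · -- full-dimensional case
      have hint : (interior C).Nonempty :=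
        hCcv.interior_nonempty_iff_affineSpan_eq_top.mpr hspan
      have hclA : closure A = C := mink_closure_eq hp0 hp1 hCcp hCcv hAC hAcv hBC heq
      intro c hc
      by_cases hcint : c ∈ interior C
      · -- interior point
        have hspanA : affineSpan ℝ A = ⊤ := by
          have hclosedspan : IsClosed ((affineSpan ℝ A : AffineSubspace ℝ E) : Set E) :=
            (affineSpan ℝ A).closed_of_finiteDimensional
          have hCsub : C ⊆ ((affineSpan ℝ A : AffineSubspace ℝ E) : Set E) := by
            rw [← hclA]
            exact closure_minimal (subset_affineSpan ℝ A) hclosedspan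
          have h1 : affineSpan ℝ C ≤ affineSpan ℝ A := affineSpan_le.mpr hCsub
          rw [hspan] at h1
          exact top_le_iff.mp h1
        have hintA : (interior A).Nonempty :=
          hAcv.interior_nonempty_iff_affineSpan_eq_top.mpr hspanA
        obtain ⟨a0, ha0⟩ := hintA
        obtain ⟨ε, hε, hball⟩ := Metric.isOpen_iff.mp isOpen_interior c hcint
        set N : ℝ := ‖c - a0‖ with hN
        have hNpos : (0:ℝ) < N + 1 := by positivity
        set t : ℝ := ε / (2 * (N + 1)) with ht
        have htpos : 0 < t := div_pos hε (by positivity)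
        set y : E := c + t • (c - a0) with hy
        have hyint : y ∈ interior C := by
          apply hball
          rw [Metric.mem_ball, dist_eq_norm]
          have h1 : ‖y - c‖ = t * N := by
            rw [hy, add_sub_cancel_left, norm_smul, Real.norm_of_nonneg htpos.le]
          rw [h1]
          have h2 : t * (N + 1) = ε / 2 := by
            rw [ht]; field_simp
          nlinarith [norm_nonneg (c - a0)]
        have h1t : (0:ℝ) < 1 + t := by linarith
        have h1t' : (1:ℝ) + t ≠ 0 := ne_of_gt h1t
        have hcomb : (t/(1+t)) • a0 + (1/(1+t)) • y = c := by
          rw [hy]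
          match_scalars
          · field_simp; ring
          · field_simp
        have hycl : y ∈ closure A := by
          rw [hclA]; exact interior_subset hyint
        have hmem : (t/(1+t)) • a0 + (1/(1+t)) • y ∈ interior A :=
          hAcv.combo_interior_closure_mem_interior ha0 hycl
            (div_pos htpos h1t) (by positivity)
            (by field_simp; ring)
        rw [hcomb] at hmem
        exact interior_subset hmem
      · -- boundary point: cut with a supporting hyperplane
        obtain ⟨f, hf⟩ := geometric_hahn_banach_open_point hCcv.interior isOpen_interior hcint
        obtain ⟨a1, ha1⟩ := hint
        have hfle : ∀ x ∈ C, f x ≤ f c := by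
          intro x hx
          have hseg : openSegment ℝ x a1 ⊆ interior C :=
            hCcv.openSegment_self_interior_subset_interior hx ha1
          have hxcl : x ∈ closure (openSegment ℝ x a1) := by
            rw [closure_openSegment]; exact left_mem_segment ℝ x a1
          have hclosed : IsClosed {y : E | f y ≤ f c} :=
            isClosed_le f.continuous continuous_const
          exact closure_minimal (fun y hy => (hf y (hseg hy)).le) hclosed hxcl
        have hflt : f a1 < f c := hf a1 ha1
        set F : Set E := C ∩ {x | f x = f c} with hFdef
        have hcF : c ∈ F := ⟨hc, rfl⟩
        have hFC : F ⊆ C := inter_subset_left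
        have hFcp : IsCompact F := hCcp.inter_right (isClosed_eq f.continuous continuous_const)
        have hFcv : Convex ℝ F :=
          hCcv.inter (convex_hyperplane (f : E →ₗ[ℝ] ℝ).isLinear (f c))
        have hdec : ∀ x ∈ F, ∃ a ∈ A ∩ F, ∃ b ∈ B ∩ F, p • a + (1-p) • b = x := by
          rintro x ⟨hxC, hxf⟩
          have hxC' := hxC
          rw [← heq] at hxC'
          obtain ⟨a, ha, b, hb, hab⟩ := hxC'
          have hfa : f a ≤ f c := hfle a (hAC ha)
          have hfb : f b ≤ f c := hfle b (hBC hb)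
          have hfx : p * f a + (1-p) * f b = f c := by
            have h1 := congrArg f hab
            simp only [map_add, map_smul, smul_eq_mul] at h1
            have h2 : f x = f c := hxf
            linarith
          have hfa' : f a = f c := by
            refine le_antisymm hfa ?_
            nlinarith [mul_nonneg (by linarith : (0:ℝ) ≤ 1 - p)
              (by linarith : (0:ℝ) ≤ f c - f b)]
          have hfb' : f b = f c := by
            refine le_antisymm hfb ?_
            nlinarith [mul_nonneg hp0.le (by linarith : (0:ℝ) ≤ f c - f a)]
          exact ⟨a, ⟨ha, hAC ha, hfa'⟩, b, ⟨hb, hBC hb, hfb'⟩, hab⟩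
        have himg2 : Set.image2 (fun a b => p • a + (1-p) • b) (A ∩ F) (B ∩ F) = F := by
          apply subset_antisymm
          · rintro _ ⟨a, ⟨haA, _, haf⟩, b, ⟨hbB, _, hbf⟩, rfl⟩
            refine ⟨?_, ?_⟩
            · rw [← heq]; exact mem_image2_of_mem haA hbB
            · show f (p • a + (1-p) • b) = f c
              have haf' : f a = f c := haf
              have hbf' : f b = f c := hbf
              simp only [map_add, map_smul, smul_eq_mul, haf', hbf']
              ring
          · intro x hx
            obtain ⟨a, ha, b, hb, hab⟩ := hdec x hx
            exact ⟨a, ha, b, hb, hab⟩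
        obtain ⟨a2, ha2, b2, hb2, -⟩ := hdec c hcF
        set W : Submodule ℝ E := LinearMap.ker (f : E →ₗ[ℝ] ℝ) with hWdef
        have hCW : ∀ x ∈ F, x - c ∈ W := by
          rintro x ⟨_, hxf⟩
          simp only [hWdef, LinearMap.mem_ker, map_sub, ContinuousLinearMap.coe_coe]
          rw [hxf]; ring
        have hWlt : W < ⊤ := by
          rw [lt_top_iff_ne_top]
          intro h
          have hmem : a1 - c ∈ W := h ▸ Submodule.mem_top
          simp only [hWdef, LinearMap.mem_ker, map_sub, ContinuousLinearMap.coe_coe] at hmem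
          have : f a1 = f c := by linarith [sub_eq_zero.mp hmem]
          linarith
        have hrk : finrank ℝ W ≤ d := by
          have h1 := Submodule.finrank_lt (K := ℝ) (V := E) hWlt.ne
          omega
        have hsub : F ⊆ A ∩ F := by
          apply mink_transfer W c hp0 hp1 hFcp (inter_subset_right) ⟨a2, ha2⟩
            (inter_subset_right) ⟨b2, hb2⟩ himg2 (hAcv.inter hFcv) (hBcv.inter hFcv) hFcv hCW
          intro C' A' B'
          exact ih W hrk C' A' B' p hp0 hp1
        exact (hsub hcF).1
    · -- degenerate case: pass to the direction of the affine span
      obtain ⟨a0, ha0⟩ := hAne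
      have hc0 : a0 ∈ C := hAC ha0
      set W : Submodule ℝ E := (affineSpan ℝ C).direction with hWdef
      have hCW : ∀ x ∈ C, x - a0 ∈ W := by
        intro x hx
        have := AffineSubspace.vsub_mem_direction (subset_affineSpan ℝ C hx)
          (subset_affineSpan ℝ C hc0)
        simpa [vsub_eq_sub] using this
      have hWlt : W < ⊤ := by
        rw [lt_top_iff_ne_top]
        intro h
        exact hspan ((AffineSubspace.direction_eq_top_iff_of_nonempty
          ⟨a0, subset_affineSpan ℝ C hc0⟩).mp h)
      have hrk : finrank ℝ W ≤ d := by
        have h1 := Submodule.finrank_lt (K := ℝ) (V := E) hWlt.ne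
        omega
      apply mink_transfer W a0 hp0 hp1 hCcp hAC ⟨a0, ha0⟩ hBC hBne heq hAcv hBcv hCcv hCW
      intro C' A' B'
      exact ih W hrk C' A' B' p hp0 hp1

end Aux

/-- let `C` be a compact convex nonempty subset of `ℝⁿ`. If `A, B` are
nonempty convex subsets of `C`, `p ∈ (0,1)`, and `pA + (1-p)B = C`, then `A = B = C`. -/
theorem minkowski_eq_self {n : ℕ} (C : Set (EuclideanSpace ℝ (Fin n)))
    (hCcp : IsCompact C) (hCcv : Convex ℝ C) (hCne : C.Nonempty)
    (A B : Set (EuclideanSpace ℝ (Fin n)))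
    (hAC : A ⊆ C) (hAcv : Convex ℝ A) (hAne : A.Nonempty)
    (hBC : B ⊆ C) (hBcv : Convex ℝ B) (hBne : B.Nonempty)
    (p : ℝ) (hp : p ∈ Set.Ioo (0:ℝ) 1)
    (heq : Set.image2 (fun a b => p • a + (1-p) • b) A B = C) :
    A = C ∧ B = C := by
  obtain ⟨hp0, hp1⟩ := hp
  have h1 : C ⊆ A :=
    mink_aux (Module.finrank ℝ (EuclideanSpace ℝ (Fin n))) _ le_rfl C A B p hp0 hp1
      hCcp hCcv hAC hAcv hAne hBC hBcv hBne heq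
  have heq' : Set.image2 (fun b a => (1-p) • b + (1-(1-p)) • a) B A = C := by
    rw [Set.image2_swap, ← heq]
    exact Set.image2_congr fun a _ b _ => by rw [sub_sub_cancel, add_comm]
  have h2 : C ⊆ B :=
    mink_aux (Module.finrank ℝ (EuclideanSpace ℝ (Fin n))) _ le_rfl C B A (1-p)
      (by linarith) (by linarith) hCcp hCcv hBC hBcv hBne hAC hAcv hAne heq'
  exact ⟨subset_antisymm hAC h1, subset_antisymm hBC h2⟩
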